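/- Let K_{n1,n2} be the complete bipartite graph with left points p_1,…,p_{n1} ∈ ℝ^d and right points p'_1,…,p'_{n2} ∈ ℝ^d, each side linearly spanning ℝ^d, and min(n1,n2) ≥ d. Then the rank of the bipartite hyperconnectivity matrix equals d(n1+n2) − d². -/

import Mathlib

/-- The bipartite hyperconnectivity matrix of the complete bipartite graph
`K_{n1,n2}` with left points `p` and right points `p'` in `ℝ^d`: the row of edge
`(i,j')` has block `p' j` in the columns of left vertex `i` and block `-(p i)`
in the columns of right vertex `j'`. -/
def bipHyperMatrix (n1 n2 d : ℕ) (p : Fin n1 → Fin d → ℝ) (p' : Fin n2 → Fin d → ℝ) :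
    Matrix (Fin n1 × Fin n2) ((Fin n1 ⊕ Fin n2) × Fin d) ℝ :=
  fun e c =>
    match c.1 with
    | Sum.inl i => if i = e.1 then p' e.2 c.2 else 0
    | Sum.inr j => if j = e.2 then -(p e.1 c.2) else 0

open Matrix Submodule

private lemma bip_dot_eq_zero_of_span {d : ℕ} {ι : Type*} {p : ι → Fin d → ℝ}
    (hspan : span ℝ (Set.range p) = ⊤) {w : Fin d → ℝ}
    (h : ∀ i, p i ⬝ᵥ w = 0) : w = 0 := by
  have hall : ∀ y : Fin d → ℝ, y ⬝ᵥ w = 0 := by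
    intro y
    have hy : y ∈ span ℝ (Set.range p) := by rw [hspan]; trivial
    induction hy using span_induction with
    | mem x hx => obtain ⟨i, rfl⟩ := hx; exact h i
    | zero => simp
    | add x y _ _ hx hy => simp [add_dotProduct, hx, hy]
    | smul a x _ hx => simp [smul_dotProduct, hx]
  exact dotProduct_self_eq_zero.mp (hall w)

private lemma bip_mulVec_apply (n1 n2 d : ℕ) (p : Fin n1 → Fin d → ℝ) (p' : Fin n2 → Fin d → ℝ)
    (x : (Fin n1 ⊕ Fin n2) × Fin d → ℝ) (i : Fin n1) (j : Fin n2) :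
    ((bipHyperMatrix n1 n2 d p p').mulVec x) (i, j)
      = (p' j ⬝ᵥ fun k => x (Sum.inl i, k)) - (p i ⬝ᵥ fun k => x (Sum.inr j, k)) := by
  simp [bipHyperMatrix, Matrix.mulVec, dotProduct, Fintype.sum_prod_type,
    Fintype.sum_sum_type, ite_mul, Finset.sum_ite_eq, sub_eq_add_neg, Finset.sum_neg_distrib,
    mul_comm]

/-- If each side of `K_{n1,n2}` linearly spans `ℝ^d` and `min(n1,n2) ≥ d`, then the
rank of the bipartite hyperconnectivity matrix equals `d(n1+n2) - d²`. -/
theorem bipHyperMatrix_rank (n1 n2 d : ℕ) (hd : d ≤ min n1 n2)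
    (p : Fin n1 → Fin d → ℝ) (p' : Fin n2 → Fin d → ℝ)
    (hspan : Submodule.span ℝ (Set.range p) = ⊤)
    (hspan' : Submodule.span ℝ (Set.range p') = ⊤) :
    (bipHyperMatrix n1 n2 d p p').rank = d * (n1 + n2) - d ^ 2 := by
  classical
  set M := bipHyperMatrix n1 n2 d p p' with hM
  -- kernel membership characterization
  have hkermem : ∀ x : (Fin n1 ⊕ Fin n2) × Fin d → ℝ, x ∈ LinearMap.ker M.mulVecLin ↔
      ∀ (i : Fin n1) (j : Fin n2),
        (p' j ⬝ᵥ fun k => x (Sum.inl i, k)) = (p i ⬝ᵥ fun k => x (Sum.inr j, k)) := by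
    intro x
    rw [LinearMap.mem_ker]
    constructor
    · intro h i j
      have h2 : (p' j ⬝ᵥ fun k => x (Sum.inl i, k)) - (p i ⬝ᵥ fun k => x (Sum.inr j, k)) = 0 := by
        have h' := congrFun h (i, j)
        rw [Matrix.mulVecLin_apply, bip_mulVec_apply] at h'
        exact h'
      linarith
    · intro h
      funext e
      rw [Matrix.mulVecLin_apply, bip_mulVec_apply]
      simp [h e.1 e.2]
  -- the kernel has dimension d * d
  have hker : Module.finrank ℝ (LinearMap.ker M.mulVecLin) = d * d := by
    apply le_antisymm
    · -- upper bound: restrict to a spanning subfamily of size d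
      obtain ⟨t, hts, htspan, hli⟩ := exists_linearIndependent ℝ (Set.range p)
      rw [hspan] at htspan
      have htfin : t.Finite := by
        have : Set.Finite (Set.range p) := Set.finite_range p
        exact this.subset hts
      haveI : Fintype t := htfin.fintype
      let b : Module.Basis t ℝ (Fin d → ℝ) := Module.Basis.mk hli (by rw [Subtype.range_coe, htspan])
      have hcard : Fintype.card t = d := by
        have h1 := Module.finrank_eq_card_basis b
        rw [Module.finrank_pi ℝ] at h1
        simpa using h1.symm
      choose σ hσ using fun w : t => hts w.2
      let R : LinearMap.ker M.mulVecLin →ₗ[ℝ] (t → Fin d → ℝ) :=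
        { toFun := fun x w k => (x : (Fin n1 ⊕ Fin n2) × Fin d → ℝ) (Sum.inl (σ w), k)
          map_add' := fun x y => rfl
          map_smul' := fun c x => rfl }
      have hRinj : Function.Injective R := by
        rw [← LinearMap.ker_eq_bot, LinearMap.ker_eq_bot']
        intro x hx0
        have hc := (hkermem x.1).mp x.2
        have hu0 : ∀ w : t, (fun k => x.1 (Sum.inl (σ w), k)) = 0 := by
          intro w; funext k; exact congrFun (congrFun hx0 w) k
        have hv0 : ∀ j : Fin n2, (fun k => x.1 (Sum.inr j, k)) = 0 := by
          intro j
          have hspanσ : span ℝ (Set.range fun w : t => p (σ w)) = ⊤ := by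
            have : (Set.range fun w : t => p (σ w)) = t := by
              ext y; constructor
              · rintro ⟨w, rfl⟩; show p (σ w) ∈ t; rw [hσ w]; exact w.2
              · intro hy; exact ⟨⟨y, hy⟩, hσ ⟨y, hy⟩⟩
            rw [this, htspan]
          refine bip_dot_eq_zero_of_span hspanσ fun w => ?_
          have h3 := hc (σ w) j
          rw [hu0 w] at h3
          simpa using h3.symm
        have hu0' : ∀ i : Fin n1, (fun k => x.1 (Sum.inl i, k)) = 0 := by
          intro i
          refine bip_dot_eq_zero_of_span hspan' fun j => ?_
          have := hc i j
          rw [hv0 j] at this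
          simpa using this
        ext c
        obtain ⟨s, k⟩ := c
        cases s with
        | inl i => exact congrFun (hu0' i) k
        | inr j => exact congrFun (hv0 j) k
      have hle := LinearMap.finrank_le_finrank_of_injective hRinj
      have : Module.finrank ℝ (t → Fin d → ℝ) = d * d := by
        rw [Module.finrank_pi_fintype ℝ]
        simp [Module.finrank_pi ℝ, hcard]
      rw [this] at hle
      exact hle
    · -- lower bound: the matrix family
      let Φ : Matrix (Fin d) (Fin d) ℝ →ₗ[ℝ] ((Fin n1 ⊕ Fin n2) × Fin d → ℝ) :=
        { toFun := fun A c => Sum.elim (fun i => (A *ᵥ p i) c.2) (fun j => (Aᵀ *ᵥ p' j) c.2) c.1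
          map_add' := by
            intro A B; funext c; obtain ⟨s, k⟩ := c
            cases s <;> simp [Matrix.add_mulVec, Matrix.transpose_add]
          map_smul' := by
            intro r A; funext c; obtain ⟨s, k⟩ := c
            cases s <;> simp [Matrix.smul_mulVec, Matrix.transpose_smul] }
      have hΦker : ∀ A, Φ A ∈ LinearMap.ker M.mulVecLin := by
        intro A
        rw [hkermem]
        intro i j
        have h1 : (fun k => Φ A (Sum.inl i, k)) = A *ᵥ p i := rfl
        have h2 : (fun k => Φ A (Sum.inr j, k)) = Aᵀ *ᵥ p' j := rfl
        rw [h1, h2, Matrix.mulVec_transpose, Matrix.dotProduct_mulVec,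
          dotProduct_comm]
      let Φ' : Matrix (Fin d) (Fin d) ℝ →ₗ[ℝ] LinearMap.ker M.mulVecLin :=
        Φ.codRestrict _ hΦker
      have hΦinj : Function.Injective Φ' := by
        rw [← LinearMap.ker_eq_bot, LinearMap.ker_eq_bot']
        intro A hA0
        have hA0' : Φ A = 0 := congrArg Subtype.val hA0
        have hmv : ∀ i, A *ᵥ p i = 0 := by
          intro i; funext k
          exact congrFun hA0' (Sum.inl i, k)
        have hall : ∀ y : Fin d → ℝ, A.mulVecLin y = 0 := by
          intro y
          have hy : y ∈ span ℝ (Set.range p) := by rw [hspan]; trivial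
          induction hy using span_induction with
          | mem x hx => obtain ⟨i, rfl⟩ := hx; simpa using hmv i
          | zero => simp
          | add x y _ _ hx hy => rw [map_add, hx, hy, add_zero]
          | smul a x _ hx => rw [_root_.map_smul, hx, smul_zero]
        ext i k
        have h4 := congrFun (hall (Pi.single k 1)) i
        simpa [Matrix.mulVecLin_apply, Matrix.mulVec, dotProduct, Pi.single_apply,
          mul_ite] using h4
      have hle := LinearMap.finrank_le_finrank_of_injective hΦinj
      have : Module.finrank ℝ (Matrix (Fin d) (Fin d) ℝ) = d * d := by
        simp [Module.finrank_matrix]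
      rw [this] at hle
      exact hle
  -- rank-nullity
  have hrn := LinearMap.finrank_range_add_finrank_ker M.mulVecLin
  have hdim : Module.finrank ℝ (((Fin n1 ⊕ Fin n2) × Fin d) → ℝ) = (n1 + n2) * d := by
    rw [Module.finrank_pi ℝ]; simp
  rw [hker, hdim] at hrn
  have hrank : M.rank = Module.finrank ℝ (LinearMap.range M.mulVecLin) := rfl
  rw [hrank, pow_two, mul_comm d (n1 + n2)]
  exact Nat.eq_sub_of_add_eq hrn
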